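/- For Hermitian X on a finite-dimensional space and any matrix B, ‖[X, B]‖ ≤ 2 ‖X‖' ‖B‖, where ‖X‖' = min_{c∈ℝ} ‖X − cI‖. -/

import Mathlib

open Matrix MeasureTheory Filter Kronecker
open scoped ComplexOrder

noncomputable def traceNorm {n : Type*} [Fintype n] [DecidableEq n] (X : Matrix n n ℂ) : ℝ :=
  (((Matrix.posSemidef_conjTranspose_mul_self X).1.eigenvectorUnitary : Matrix n n ℂ) *
    diagonal (((↑) : ℝ → ℂ) ∘ (Real.sqrt ·) ∘ (Matrix.posSemidef_conjTranspose_mul_self X).1.eigenvalues) *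
    (star ((Matrix.posSemidef_conjTranspose_mul_self X).1.eigenvectorUnitary : Matrix n n ℂ))).trace.re

noncomputable def frobNorm {n : Type*} [Fintype n] (X : Matrix n n ℂ) : ℝ :=
  Real.sqrt ((Xᴴ * X)).trace.re

noncomputable def opNorm {n : Type*} [Fintype n] [DecidableEq n] (X : Matrix n n ℂ) : ℝ :=
  ‖LinearMap.toContinuousLinearMap (Matrix.toEuclideanLin X)‖

open scoped Matrix.Norms.L2Operator in
lemma opNorm_eq_norm {n : Type*} [Fintype n] [DecidableEq n] (X : Matrix n n ℂ) :
    opNorm X = ‖X‖ := rfl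

/-- For Hermitian `X` and any `B`: `‖[X,B]‖ ≤ 2 ‖X‖' ‖B‖`,
where `‖X‖' = inf_{c ∈ ℝ} ‖X − cI‖`. -/
theorem opNorm_commutator_le_two_centered_norm {n : Type*} [Fintype n] [DecidableEq n]
    (X B : Matrix n n ℂ) (hX : X.IsHermitian) :
    opNorm (X * B - B * X) ≤ 2 * (⨅ c : ℝ, opNorm (X - (c : ℂ) • 1)) * opNorm B := by
  open scoped Matrix.Norms.L2Operator in
  simp only [opNorm_eq_norm]
  have key : ∀ c : ℝ, ‖X * B - B * X‖ ≤ 2 * ‖X - (c : ℂ) • 1‖ * ‖B‖ := by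
    intro c
    have h1 : X * B - B * X = (X - (c : ℂ) • 1) * B - B * (X - (c : ℂ) • 1) := by
      rw [Matrix.sub_mul, Matrix.mul_sub, Matrix.smul_mul, Matrix.mul_smul, one_mul, mul_one]
      abel
    rw [h1]
    calc ‖(X - (c : ℂ) • 1) * B - B * (X - (c : ℂ) • 1)‖
        ≤ ‖(X - (c : ℂ) • 1) * B‖ + ‖B * (X - (c : ℂ) • 1)‖ := norm_sub_le _ _
      _ ≤ ‖X - (c : ℂ) • 1‖ * ‖B‖ + ‖B‖ * ‖X - (c : ℂ) • 1‖ :=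
          add_le_add (norm_mul_le _ _) (norm_mul_le _ _)
      _ = 2 * ‖X - (c : ℂ) • 1‖ * ‖B‖ := by ring
  have hbdd : BddBelow (Set.range fun c : ℝ => ‖X - (c : ℂ) • 1‖) :=
    ⟨0, by rintro x ⟨c, rfl⟩; exact norm_nonneg _⟩
  rcases eq_or_lt_of_le (norm_nonneg B) with hB | hB
  · have : B = 0 := norm_eq_zero.mp hB.symm
    subst this
    simp only [mul_zero, zero_mul, sub_zero, norm_zero]
    positivity
  · have h2B : (0:ℝ) < 2 * ‖B‖ := by linarith
    have : 2 * (⨅ c : ℝ, ‖X - (c : ℂ) • 1‖) * ‖B‖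
        = (⨅ c : ℝ, ‖X - (c : ℂ) • 1‖) * (2 * ‖B‖) := by ring
    rw [this, ← div_le_iff₀ h2B]
    refine le_ciInf fun c => ?_
    rw [div_le_iff₀ h2B]
    calc ‖X * B - B * X‖ ≤ 2 * ‖X - (c : ℂ) • 1‖ * ‖B‖ := key c
      _ = ‖X - (c : ℂ) • 1‖ * (2 * ‖B‖) := by ring
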